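/- Let D be an integral domain with quotient field K and let ⋆ be a semistar operation of D. Then (▲^⋆)_f = (▲^{⋆_f})_f, and this semistar operation of D[X] is the largest finite-type strict extension of ⋆_f: it is a strict extension of ⋆_f, it is of finite type, and every finite-type strict extension ★ of ⋆_f to D[X] satisfies ★ ≤ (▲^⋆)_f. -/

import Mathlib

/- Preliminaries: semistar operations on an integral domain `R` with quotient field `F`
(submodules of `F` over `R`), polynomial extension of semistar operations from `D`
to `D[X]` (viewed inside the quotient field `K(X) = RatFunc K` of `D[X]`). -/

open Polynomial Pointwise

set_option synthInstance.maxHeartbeats 1000000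
set_option maxHeartbeats 1000000

open scoped Classical

noncomputable section

section Generic

variable (R F : Type*) [CommRing R] [Field F] [Algebra R F]

/-- `o` is a semistar operation of `R` (on the nonzero `R`-submodules of the
quotient field `F`). -/
def IsSemistarOp (o : Submodule R F → Submodule R F) : Prop :=
  (∀ x : F, x ≠ 0 → ∀ E : Submodule R F, E ≠ ⊥ → o (x • E) = x • o E) ∧
  (∀ E G : Submodule R F, E ≠ ⊥ → G ≠ ⊥ → E ≤ G → o E ≤ o G) ∧
  (∀ E : Submodule R F, E ≠ ⊥ → E ≤ o E) ∧
  (∀ E : Submodule R F, E ≠ ⊥ → o (o E) = o E)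

/-- The finite-type operation `⋆_f` associated to `⋆`:
`E^{⋆_f} = ⋃ { G^⋆ : G nonzero finitely generated, G ⊆ E }`. -/
def finTypeFun (o : Submodule R F → Submodule R F) : Submodule R F → Submodule R F :=
  fun E => ⨆ (G : Submodule R F) (_ : G ≠ ⊥) (_ : G.FG) (_ : G ≤ E), o G

/-- `⋆` is of finite type, i.e. `⋆ = ⋆_f`. -/
def IsFiniteTypeFun (o : Submodule R F → Submodule R F) : Prop :=
  ∀ E : Submodule R F, E ≠ ⊥ → o E = finTypeFun R F o E

/-- `⋆` is stable: `(E ∩ G)^⋆ = E^⋆ ∩ G^⋆`. -/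
def IsStableFun (o : Submodule R F → Submodule R F) : Prop :=
  ∀ E G : Submodule R F, E ≠ ⊥ → G ≠ ⊥ → o (E ⊓ G) = o E ⊓ o G

/-- An ideal of `R` viewed as an `R`-submodule of `F`. -/
def idealSub (J : Ideal R) : Submodule R F := Submodule.map (Algebra.linearMap R F) J

/-- `(E : J) = { x ∈ F : xJ ⊆ E }` for an ideal `J` of `R`. -/
def colonIdeal (E : Submodule R F) (J : Ideal R) : Submodule R F where
  carrier := { x : F | ∀ a ∈ J, a • x ∈ E }
  add_mem' := fun {x y} hx hy a ha => by
    simpa [smul_add] using E.add_mem (hx a ha) (hy a ha)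
  zero_mem' := fun a _ => by simpa using E.zero_mem
  smul_mem' := fun r x hx a ha => by
    rw [← mul_smul, mul_comm, mul_smul]
    exact E.smul_mem r (hx a ha)

/-- The stable finite-type operation `tilde ⋆` associated to `⋆`:
`E^{tilde ⋆} = ⋃ { (E : J) : J nonzero finitely generated integral ideal with J^⋆ = R^⋆ }`. -/
def tildeFun (o : Submodule R F → Submodule R F) : Submodule R F → Submodule R F :=
  fun E => ⨆ (J : Ideal R) (_ : J ≠ ⊥) (_ : J.FG)
    (_ : o (idealSub R F J) = o (1 : Submodule R F)), colonIdeal R F E J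

/-- The `v`-operation: `E^v = (R : (R : E))` for `E` a nonzero fractional ideal,
and `E^v = F` otherwise. -/
def vFun : Submodule R F → Submodule R F := fun E =>
  if ∃ d : R, d ≠ 0 ∧ ∀ x ∈ E, d • x ∈ (1 : Submodule R F) then
    (1 : Submodule R F) / ((1 : Submodule R F) / E)
  else ⊤

/-- The `eab` operation `⋆_a` associated to `⋆`. -/
def aFun (o : Submodule R F → Submodule R F) : Submodule R F → Submodule R F := fun E =>
  ⨆ (G : Submodule R F) (_ : G ≠ ⊥) (_ : G.FG) (_ : G ≤ E),
    ⨆ (H : Submodule R F) (_ : H ≠ ⊥) (_ : H.FG), o (G * H) / o H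

/-- `I` is a quasi-`⋆`-ideal: a nonzero integral ideal with `I^⋆ ∩ R = I`. -/
def isQuasiIdealFun (o : Submodule R F → Submodule R F) (I : Ideal R) : Prop :=
  I ≠ ⊥ ∧ (o (idealSub R F I)).comap (Algebra.linearMap R F) = I

/-- `I` is a quasi-`⋆`-maximal ideal: maximal among proper quasi-`⋆`-ideals. -/
def isQuasiMaximalFun (o : Submodule R F → Submodule R F) (I : Ideal R) : Prop :=
  isQuasiIdealFun R F o I ∧ I ≠ ⊤ ∧
    ∀ J : Ideal R, isQuasiIdealFun R F o J → J ≠ ⊤ → I ≤ J → I = J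

/-- The `v`-operation relative to an overring `R'` (an `R`-submodule of `F`):
`B ↦ (R' : (R' : B))` for `B` a nonzero fractional ideal of `R'`, `F` otherwise. -/
def vRelFun (R' B : Submodule R F) : Submodule R F :=
  if ∃ z ∈ R', z ≠ 0 ∧ ∀ x ∈ B, z * x ∈ R' then R' / (R' / B) else ⊤

/-- The `t`-operation relative to an overring `R'`: finite-type operation associated to
the `v`-operation of `R'` (the union being over nonzero finitely generated
`R'`-submodules contained in `B`). -/
def tRelFun (R' B : Submodule R F) : Submodule R F :=
  ⨆ (G : Submodule R F) (_ : G ≠ ⊥)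
    (_ : ∃ S : Finset F, G = R' * Submodule.span R (S : Set F)) (_ : G ≤ B),
    vRelFun R F R' G

end Generic

section Poly

variable (D K : Type*) [CommRing D] [IsDomain D] [Field K] [Algebra D K] [IsFractionRing D K]

/-- The canonical ring homomorphism `D[X] → K(X)`. -/
def polyToRF : Polynomial D →+* RatFunc K :=
  (algebraMap (Polynomial K) (RatFunc K)).comp (Polynomial.mapRingHom (algebraMap D K))

/-- `K(X)` is an algebra over `D[X]`; in fact it is the quotient field of `D[X]`. -/
instance (priority := 100) : Algebra (Polynomial D) (RatFunc K) := (polyToRF D K).toAlgebra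

/-- For a `D`-submodule `E` of `K`, the `D[X]`-submodule `E[X]` of `K(X)`:
polynomials all of whose coefficients lie in `E`. -/
def polyExt (E : Submodule D K) : Submodule (Polynomial D) (RatFunc K) where
  carrier := { f : RatFunc K | ∃ p : Polynomial K, (∀ n, p.coeff n ∈ E) ∧
      f = algebraMap (Polynomial K) (RatFunc K) p }
  add_mem' := by
    rintro f g ⟨p, hp, rfl⟩ ⟨q, hq, rfl⟩
    exact ⟨p + q, fun n => by simpa using E.add_mem (hp n) (hq n), by simp⟩
  zero_mem' := ⟨0, fun n => by simpa using E.zero_mem, by simp⟩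
  smul_mem' := by
    rintro c f ⟨p, hp, rfl⟩
    refine ⟨Polynomial.map (algebraMap D K) c * p, fun n => ?_, ?_⟩
    · rw [Polynomial.coeff_mul]
      refine Submodule.sum_mem E fun ij _ => ?_
      rw [Polynomial.coeff_map, ← Algebra.smul_def]
      exact E.smul_mem _ (hp ij.2)
    · rw [Algebra.smul_def, RingHom.algebraMap_toAlgebra, map_mul]
      unfold polyToRF
      simp

/-- The contraction `B ∩ K` of a `D[X]`-submodule `B` of `K(X)` to a `D`-submodule of `K`. -/
def contractToBase (B : Submodule (Polynomial D) (RatFunc K)) : Submodule D K where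
  carrier := { x : K | algebraMap K (RatFunc K) x ∈ B }
  add_mem' := fun {x y} hx hy => by
    simpa [Set.mem_setOf_eq, map_add] using B.add_mem hx hy
  zero_mem' := by simpa using B.zero_mem
  smul_mem' := fun d x hx => by
    have h : algebraMap K (RatFunc K) (d • x)
        = (Polynomial.C d : Polynomial D) • (algebraMap K (RatFunc K) x) := by
      rw [Algebra.smul_def d x, map_mul, Algebra.smul_def, RingHom.algebraMap_toAlgebra]
      unfold polyToRF
      simp only [RingHom.coe_comp, Function.comp_apply, Polynomial.coe_mapRingHom,
        Polynomial.map_C, RatFunc.algebraMap_C, RatFunc.algebraMap_eq_C]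
    show algebraMap K (RatFunc K) (d • x) ∈ B
    rw [h]
    exact B.smul_mem (Polynomial.C d) hx

/-- The content `c_D(S)`: the `D`-submodule of `K` generated by the coefficients of all
polynomials belonging to `S`. -/
def contentOf (S : Set (RatFunc K)) : Submodule D K :=
  Submodule.span D { x : K | ∃ p : Polynomial K,
    algebraMap (Polynomial K) (RatFunc K) p ∈ S ∧ ∃ n, p.coeff n = x }

/-- The semistar operation `▲^⋆_T` of `D[X]` associated to a semistar operation `⋆` of `D`
and an overring `T` of `D`:
`A ↦ ⋂ { z⁻¹ (c_D(zA))^⋆[X] : z ∈ (T[X] : A), z ≠ 0 }` if `(T[X] : A) ≠ 0`, else `A ↦ K(X)`. -/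
def bigTriT (o : Submodule D K → Submodule D K) (T : Subalgebra D K) :
    Submodule (Polynomial D) (RatFunc K) → Submodule (Polynomial D) (RatFunc K) := fun A =>
  if ∃ z : RatFunc K, z ≠ 0 ∧ ∀ a ∈ A, z * a ∈ polyExt D K (Subalgebra.toSubmodule T) then
    ⨅ (z : RatFunc K) (_ : z ≠ 0) (_ : ∀ a ∈ A, z * a ∈ polyExt D K (Subalgebra.toSubmodule T)),
      z⁻¹ • polyExt D K (o (contentOf D K (z • (A : Set (RatFunc K)))))
  else ⊤

/-- `▲^⋆ := ▲^⋆_K`, the largest strict extension of `⋆` to `D[X]`. -/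
def bigTri (o : Submodule D K → Submodule D K) :
    Submodule (Polynomial D) (RatFunc K) → Submodule (Polynomial D) (RatFunc K) :=
  bigTriT D K o ⊤

/-- `b` is an extension of `⋆` to `D[X]` : `E^⋆ = (E[X])^b ∩ K`. -/
def IsExtensionFun (o : Submodule D K → Submodule D K)
    (b : Submodule (Polynomial D) (RatFunc K) → Submodule (Polynomial D) (RatFunc K)) : Prop :=
  ∀ E : Submodule D K, E ≠ ⊥ → o E = contractToBase D K (b (polyExt D K E))

/-- `b` is a strict extension of `⋆` to `D[X]` : `(E[X])^b = E^⋆[X]`. -/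
def IsStrictExtensionFun (o : Submodule D K → Submodule D K)
    (b : Submodule (Polynomial D) (RatFunc K) → Submodule (Polynomial D) (RatFunc K)) : Prop :=
  ∀ E : Submodule D K, E ≠ ⊥ → b (polyExt D K E) = polyExt D K (o E)

/-- `⋏^⋆ : A ↦ ⋂ { A^★ : ★ a semistar operation of D[X] extending ⋆ }`. -/
def curlyFun (o : Submodule D K → Submodule D K) :
    Submodule (Polynomial D) (RatFunc K) → Submodule (Polynomial D) (RatFunc K) := fun A =>
  ⨅ (b : Submodule (Polynomial D) (RatFunc K) → Submodule (Polynomial D) (RatFunc K))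
    (_ : IsSemistarOp (Polynomial D) (RatFunc K) b) (_ : IsExtensionFun D K o b), b A

/-- The localization `D_Q` of `D` at a prime ideal `Q`, as a `D`-submodule of `K`. -/
def locSub (Q : Ideal D) : Submodule D K :=
  Submodule.span D { x : K | ∃ s : D, s ∉ Q ∧ s • x ∈ (1 : Submodule D K) }

/-- The content of an ideal `I` of `D[X]`: the `D`-submodule of `K` generated by the
coefficients of the polynomials in `I`. -/
def contentOfIdeal (I : Ideal (Polynomial D)) : Submodule D K :=
  Submodule.span D { x : K | ∃ p ∈ I, ∃ n, algebraMap D K (Polynomial.coeff p n) = x }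

/-- The Nagata ring `D_Q(X)`, as a subset of `K(X)`: fractions `f/g` with
`f, g ∈ D_Q[X]` and the coefficients of `g` generating the unit ideal of `D_Q`. -/
def nagataSet (Q : Ideal D) : Set (RatFunc K) :=
  { u : RatFunc K | ∃ g : Polynomial K, (∀ n, g.coeff n ∈ locSub D K Q) ∧
      locSub D K Q * Submodule.span D { x : K | ∃ n, g.coeff n = x } = locSub D K Q ∧
      u * algebraMap (Polynomial K) (RatFunc K) g ∈ polyExt D K (locSub D K Q) }

end Poly


section Helpers

variable {D K : Type*} [CommRing D] [IsDomain D] [Field K] [Algebra D K] [IsFractionRing D K]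

theorem algP_inj : Function.Injective (algebraMap (Polynomial K) (RatFunc K)) :=
  IsFractionRing.injective _ _

theorem mem_inv_smul_iff {z : RatFunc K} (hz : z ≠ 0)
    {M : Submodule (Polynomial D) (RatFunc K)} {f : RatFunc K} :
    f ∈ z⁻¹ • M ↔ z * f ∈ M := by
  constructor
  · intro hf
    rw [← SetLike.mem_coe, Submodule.coe_pointwise_smul] at hf
    obtain ⟨m, hm, rfl⟩ := hf
    have h : z * (z⁻¹ • m) = m := by
      rw [smul_eq_mul, ← mul_assoc, mul_inv_cancel₀ hz, one_mul]
    rwa [h]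
  · intro hf
    rw [← SetLike.mem_coe, Submodule.coe_pointwise_smul]
    refine ⟨z * f, hf, ?_⟩
    show z⁻¹ • (z * f) = f
    rw [smul_eq_mul, ← mul_assoc, inv_mul_cancel₀ hz, one_mul]

theorem smul_polyD (c : Polynomial D) (f : RatFunc K) :
    c • f = algebraMap (Polynomial K) (RatFunc K) (c.map (algebraMap D K)) * f := by
  rw [Algebra.smul_def, RingHom.algebraMap_toAlgebra]
  rfl

theorem algK_eq (x : K) :
    algebraMap K (RatFunc K) x = algebraMap (Polynomial K) (RatFunc K) (Polynomial.C x) := by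
  rw [RatFunc.algebraMap_C, RatFunc.algebraMap_eq_C]

theorem polyExt_mono {E F : Submodule D K} (h : E ≤ F) : polyExt D K E ≤ polyExt D K F := by
  rintro f ⟨p, hp, rfl⟩
  exact ⟨p, fun n => h (hp n), rfl⟩

theorem algK_mem_polyExt {E : Submodule D K} {x : K} (hx : x ∈ E) :
    algebraMap K (RatFunc K) x ∈ polyExt D K E := by
  refine ⟨Polynomial.C x, fun n => ?_, (algK_eq x)⟩
  by_cases hn : n = 0
  · simpa [hn] using hx
  · simp [Polynomial.coeff_C, hn]

theorem polyExt_ne_bot {E : Submodule D K} (hE : E ≠ ⊥) : polyExt D K E ≠ ⊥ := by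
  obtain ⟨x, hx, hx0⟩ := (Submodule.ne_bot_iff E).mp hE
  refine (Submodule.ne_bot_iff _).mpr ⟨algebraMap K (RatFunc K) x, algK_mem_polyExt hx, ?_⟩
  simpa using (RingHom.injective (algebraMap K (RatFunc K))).ne_iff.mpr hx0

theorem coeff_mem_contentOf {S : Set (RatFunc K)} {p : Polynomial K}
    (h : algebraMap (Polynomial K) (RatFunc K) p ∈ S) (n : ℕ) :
    p.coeff n ∈ contentOf D K S :=
  Submodule.subset_span ⟨p, h, n, rfl⟩

theorem contentOf_le {S : Set (RatFunc K)} {E : Submodule D K}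
    (h : S ⊆ (polyExt D K E : Set (RatFunc K))) : contentOf D K S ≤ E := by
  refine Submodule.span_le.mpr ?_
  rintro x ⟨p, hp, n, rfl⟩
  obtain ⟨q, hq, heq⟩ := h hp
  rw [algP_inj heq]
  exact hq n

theorem mem_polyExt_top_iff {f : RatFunc K} :
    f ∈ polyExt D K (Subalgebra.toSubmodule (⊤ : Subalgebra D K)) ↔
      ∃ p : Polynomial K, f = algebraMap (Polynomial K) (RatFunc K) p := by
  constructor
  · rintro ⟨p, _, rfl⟩; exact ⟨p, rfl⟩
  · rintro ⟨p, rfl⟩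
    exact ⟨p, fun n => by simp [Subalgebra.mem_toSubmodule, Algebra.mem_top], rfl⟩

theorem contentOf_smul_ne_bot {G : Submodule (Polynomial D) (RatFunc K)} {z : RatFunc K}
    (hG : G ≠ ⊥) (hz : z ≠ 0)
    (h : ∀ a ∈ G, ∃ p : Polynomial K, z * a = algebraMap (Polynomial K) (RatFunc K) p) :
    contentOf D K (z • (G : Set (RatFunc K))) ≠ ⊥ := by
  obtain ⟨a, ha, ha0⟩ := (Submodule.ne_bot_iff G).mp hG
  obtain ⟨p, hp⟩ := h a ha
  have hza : z * a ≠ 0 := mul_ne_zero hz ha0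
  have hp0 : p ≠ 0 := by
    rintro rfl; rw [map_zero] at hp; exact hza hp
  obtain ⟨n, hn⟩ : ∃ n, p.coeff n ≠ 0 := by
    by_contra hc; push_neg at hc; exact hp0 (Polynomial.ext fun n => by simp [hc n])
  have hmem : algebraMap (Polynomial K) (RatFunc K) p ∈ z • (G : Set (RatFunc K)) := by
    rw [← hp]
    exact ⟨a, ha, rfl⟩
  exact (Submodule.ne_bot_iff _).mpr ⟨p.coeff n, coeff_mem_contentOf hmem n, hn⟩

end Helpers


section GenericHelpers

variable {R F : Type*} [CommRing R] [Field F] [Algebra R F]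

theorem op_le_finTypeFun (o : Submodule R F → Submodule R F) {G E : Submodule R F}
    (h1 : G ≠ ⊥) (h2 : G.FG) (h3 : G ≤ E) : o G ≤ finTypeFun R F o E := by
  exact le_iSup_of_le G (le_iSup_of_le h1 (le_iSup_of_le h2 (le_iSup_of_le h3 le_rfl)))

theorem finTypeFun_le_self {o : Submodule R F → Submodule R F} (ho : IsSemistarOp R F o)
    {E : Submodule R F} (hE : E ≠ ⊥) : finTypeFun R F o E ≤ o E :=
  iSup_le fun G => iSup_le fun h1 => iSup_le fun _ => iSup_le fun h3 => ho.2.1 G E h1 hE h3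

theorem finTypeFun_eq_of_fg {o : Submodule R F → Submodule R F} (ho : IsSemistarOp R F o)
    {E : Submodule R F} (h1 : E ≠ ⊥) (h2 : E.FG) : finTypeFun R F o E = o E :=
  le_antisymm (finTypeFun_le_self ho h1) (op_le_finTypeFun o h1 h2 le_rfl)

theorem finTypeFun_mono (o : Submodule R F → Submodule R F) {E G : Submodule R F}
    (h : E ≤ G) : finTypeFun R F o E ≤ finTypeFun R F o G :=
  iSup_le fun H => iSup_le fun h1 => iSup_le fun h2 => iSup_le fun h3 =>
    op_le_finTypeFun o h1 h2 (le_trans h3 h)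

theorem finTypeFun_idem (o : Submodule R F → Submodule R F) (E : Submodule R F) :
    finTypeFun R F (finTypeFun R F o) E = finTypeFun R F o E := by
  refine le_antisymm ?_ ?_
  · exact iSup_le fun G => iSup_le fun h1 => iSup_le fun h2 => iSup_le fun h3 =>
      finTypeFun_mono o h3
  · exact iSup_le fun G => iSup_le fun h1 => iSup_le fun h2 => iSup_le fun h3 =>
      le_trans (op_le_finTypeFun o h1 h2 le_rfl)
        (op_le_finTypeFun (finTypeFun R F o) h1 h2 h3)

theorem exists_fg_of_mem_finTypeFun {o : Submodule R F → Submodule R F}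
    (ho : IsSemistarOp R F o) {E : Submodule R F} (hE : E ≠ ⊥) {a : F}
    (ha : a ∈ finTypeFun R F o E) : ∃ G, G ≠ ⊥ ∧ G.FG ∧ G ≤ E ∧ a ∈ o G := by
  obtain ⟨x0, hx0, hx00⟩ := (Submodule.ne_bot_iff E).mp hE
  have hsub : ∀ {G₁ G₂ : Submodule R F}, G₁ ≠ ⊥ → G₂ ≠ ⊥ → (G₁ ⊔ G₂) ≠ ⊥ := by
    intro G₁ G₂ h1 _ h
    exact h1 (le_bot_iff.mp (h ▸ le_sup_left))
  let M : Submodule R F :=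
    { carrier := { a : F | ∃ G, (G ≠ ⊥ ∧ G.FG ∧ G ≤ E) ∧ a ∈ o G }
      add_mem' := by
        rintro x y ⟨G₁, ⟨hb1, hf1, hl1⟩, hx⟩ ⟨G₂, ⟨hb2, hf2, hl2⟩, hy⟩
        refine ⟨G₁ ⊔ G₂, ⟨hsub hb1 hb2, hf1.sup hf2, sup_le hl1 hl2⟩, ?_⟩
        exact Submodule.add_mem _ (ho.2.1 _ _ hb1 (hsub hb1 hb2) le_sup_left hx)
          (ho.2.1 _ _ hb2 (hsub hb1 hb2) le_sup_right hy)
      zero_mem' := by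
        refine ⟨Submodule.span R {x0}, ⟨?_, Submodule.fg_span_singleton x0, ?_⟩, zero_mem _⟩
        · simpa [Submodule.span_singleton_eq_bot] using hx00
        · simpa [Submodule.span_le] using hx0
      smul_mem' := by
        rintro r x ⟨G, hG, hx⟩
        exact ⟨G, hG, Submodule.smul_mem _ r hx⟩ }
  have hle : finTypeFun R F o E ≤ M :=
    iSup_le fun G => iSup_le fun h1 => iSup_le fun h2 => iSup_le fun h3 =>
      fun a ha => ⟨G, ⟨h1, h2, h3⟩, ha⟩
  obtain ⟨G, ⟨h1, h2, h3⟩, h4⟩ := hle ha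
  exact ⟨G, h1, h2, h3, h4⟩

end GenericHelpers


section ContentFG

variable {D K : Type*} [CommRing D] [IsDomain D] [Field K] [Algebra D K] [IsFractionRing D K]

theorem contentOf_smul_fg {G : Submodule (Polynomial D) (RatFunc K)} {z : RatFunc K}
    (hG : G.FG)
    (h : ∀ a ∈ G, ∃ p : Polynomial K, z * a = algebraMap (Polynomial K) (RatFunc K) p) :
    (contentOf D K (z • (G : Set (RatFunc K)))).FG := by
  obtain ⟨s, hs⟩ := hG
  -- choice of polynomial representatives
  let q : RatFunc K → Polynomial K := fun a =>
    if h' : ∃ p : Polynomial K, z * a = algebraMap (Polynomial K) (RatFunc K) p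
      then h'.choose else 0
  have hq : ∀ a ∈ G, z * a = algebraMap (Polynomial K) (RatFunc K) (q a) := by
    intro a ha
    have h' := h a ha
    simp only [q, dif_pos h']
    exact h'.choose_spec
  classical
  let t : Finset K := s.biUnion fun a => insert 0 (((q a).support).image ((q a).coeff))
  refine ⟨t, ?_⟩
  have hsG : (s : Set (RatFunc K)) ⊆ (G : Set (RatFunc K)) := by
    rw [← hs]; exact Submodule.subset_span
  refine le_antisymm ?_ ?_
  · -- span t ≤ content
    refine Submodule.span_le.mpr ?_
    intro x hx
    obtain ⟨a, has, hx⟩ := Finset.mem_biUnion.mp hx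
    rcases Finset.mem_insert.mp hx with h0 | hx
    · rw [h0]; exact zero_mem _
    · obtain ⟨m, _, rfl⟩ := Finset.mem_image.mp hx
      have hmem : algebraMap (Polynomial K) (RatFunc K) (q a) ∈ z • (G : Set (RatFunc K)) := by
        rw [← hq a (hsG has)]
        exact ⟨a, hsG has, rfl⟩
      exact coeff_mem_contentOf hmem m
  · -- content ≤ span t
    refine Submodule.span_le.mpr ?_
    rintro x ⟨p, hp, n, rfl⟩
    obtain ⟨a, haG, hza⟩ := hp
    have hza' : z * a = algebraMap (Polynomial K) (RatFunc K) p := by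
      rw [← hza]; rfl
    -- a is a combination of elements of s
    rw [← hs] at haG
    obtain ⟨c, -, hc⟩ := Submodule.mem_span_finset.mp haG
    have key : z * a = algebraMap (Polynomial K) (RatFunc K)
        (∑ i ∈ s, (c i).map (algebraMap D K) * q i) := by
      rw [← hc, Finset.mul_sum, map_sum]
      refine Finset.sum_congr rfl fun i hi => ?_
      rw [map_mul, smul_polyD (c i) i, ← hq i (hsG hi)]
      ring
    have hpeq : p = ∑ i ∈ s, (c i).map (algebraMap D K) * q i :=
      algP_inj (hza'.symm.trans key)
    rw [hpeq, Polynomial.finset_sum_coeff]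
    refine Submodule.sum_mem _ fun i hi => ?_
    rw [Polynomial.coeff_mul]
    refine Submodule.sum_mem _ fun jk _ => ?_
    rw [Polynomial.coeff_map, ← Algebra.smul_def]
    refine Submodule.smul_mem _ _ (Submodule.subset_span ?_)
    by_cases hz : (q i).coeff jk.2 = 0
    · rw [hz]
      exact Finset.mem_biUnion.mpr ⟨i, hi, Finset.mem_insert_self 0 _⟩
    · refine Finset.mem_biUnion.mpr ⟨i, hi, Finset.mem_insert_of_mem ?_⟩
      exact Finset.mem_image.mpr ⟨jk.2, Polynomial.mem_support_iff.mpr hz, rfl⟩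

end ContentFG


section PolyHelpers

variable {D K : Type*} [CommRing D] [IsDomain D] [Field K] [Algebra D K] [IsFractionRing D K]

theorem exists_F_for_poly {star : Submodule D K → Submodule D K} (hstar : IsSemistarOp D K star)
    {E : Submodule D K} (hE : E ≠ ⊥) (p : Polynomial K)
    (hp : ∀ n, p.coeff n ∈ finTypeFun D K star E) :
    ∃ F : Submodule D K, F ≠ ⊥ ∧ F.FG ∧ F ≤ E ∧ ∀ n, p.coeff n ∈ star F := by
  obtain ⟨x0, hx0, hx00⟩ := (Submodule.ne_bot_iff E).mp hE
  have hsub : ∀ {G₁ G₂ : Submodule D K}, G₁ ≠ ⊥ → (G₁ ⊔ G₂) ≠ ⊥ := by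
    intro G₁ G₂ h1 h
    exact h1 (le_bot_iff.mp (h ▸ le_sup_left))
  have main : ∀ s : Finset ℕ, ∃ F : Submodule D K,
      F ≠ ⊥ ∧ F.FG ∧ F ≤ E ∧ ∀ n ∈ s, p.coeff n ∈ star F := by
    intro s
    induction s using Finset.induction_on with
    | empty =>
      refine ⟨Submodule.span D {x0}, ?_, Submodule.fg_span_singleton x0, ?_,
        fun n hn => absurd hn (by simp)⟩
      · simpa [Submodule.span_singleton_eq_bot] using hx00
      · simpa [Submodule.span_le] using hx0
    | @insert a s _ ih =>
      obtain ⟨F, h1, h2, h3, h4⟩ := ih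
      obtain ⟨Fa, g1, g2, g3, g4⟩ := exists_fg_of_mem_finTypeFun hstar hE (hp a)
      refine ⟨F ⊔ Fa, hsub h1, h2.sup g2, sup_le h3 g3, fun n hn => ?_⟩
      rcases Finset.mem_insert.mp hn with rfl | hn
      · exact hstar.2.1 Fa (F ⊔ Fa) g1 (hsub h1) le_sup_right g4
      · exact hstar.2.1 F (F ⊔ Fa) h1 (hsub h1) le_sup_left (h4 n hn)
  obtain ⟨F, h1, h2, h3, h4⟩ := main p.support
  refine ⟨F, h1, h2, h3, fun n => ?_⟩
  by_cases hn : n ∈ p.support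
  · exact h4 n hn
  · rw [Polynomial.notMem_support_iff.mp hn]; exact zero_mem _

end PolyHelpers

/- The theorem. -/

theorem finType_bigTri (D K : Type*) [CommRing D] [IsDomain D] [Field K] [Algebra D K] [IsFractionRing D K]
    (star : Submodule D K → Submodule D K) (hstar : IsSemistarOp D K star) :
    (∀ A : Submodule (Polynomial D) (RatFunc K), A ≠ ⊥ →
      finTypeFun (Polynomial D) (RatFunc K) (bigTri D K star) A =
        finTypeFun (Polynomial D) (RatFunc K) (bigTri D K (finTypeFun D K star)) A) ∧
    IsStrictExtensionFun D K (finTypeFun D K star)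
      (finTypeFun (Polynomial D) (RatFunc K) (bigTri D K star)) ∧
    IsFiniteTypeFun (Polynomial D) (RatFunc K)
      (finTypeFun (Polynomial D) (RatFunc K) (bigTri D K star)) ∧
    ∀ b : Submodule (Polynomial D) (RatFunc K) → Submodule (Polynomial D) (RatFunc K),
      IsSemistarOp (Polynomial D) (RatFunc K) b →
      IsFiniteTypeFun (Polynomial D) (RatFunc K) b →
      IsStrictExtensionFun D K (finTypeFun D K star) b →
      ∀ A : Submodule (Polynomial D) (RatFunc K), A ≠ ⊥ →
        b A ≤ finTypeFun (Polynomial D) (RatFunc K) (bigTri D K star) A := by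

  have hTop : ∀ (A : Submodule (Polynomial D) (RatFunc K)) (z : RatFunc K),
      (∀ a ∈ A, z * a ∈ polyExt D K (Subalgebra.toSubmodule (⊤ : Subalgebra D K))) →
      ∀ a ∈ A, ∃ p : Polynomial K, z * a = algebraMap (Polynomial K) (RatFunc K) p :=
    fun A z h a ha => mem_polyExt_top_iff.mp (h a ha)
  have part2 : IsStrictExtensionFun D K (finTypeFun D K star)
      (finTypeFun (Polynomial D) (RatFunc K) (bigTri D K star)) := by
    intro E hE
    apply le_antisymm
    · refine iSup_le fun G => iSup_le fun h1 => iSup_le fun h2 => iSup_le fun h3 => ?_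
      have hGtop : ∀ a ∈ G, (1 : RatFunc K) * a ∈
          polyExt D K (Subalgebra.toSubmodule (⊤ : Subalgebra D K)) := by
        intro a ha
        rw [one_mul, mem_polyExt_top_iff]
        obtain ⟨p, _, hpeq⟩ := h3 ha
        exact ⟨p, hpeq⟩
      have hcond : ∃ z : RatFunc K, z ≠ 0 ∧ ∀ a ∈ G, z * a ∈
          polyExt D K (Subalgebra.toSubmodule (⊤ : Subalgebra D K)) := ⟨1, one_ne_zero, hGtop⟩
      rw [bigTri, bigTriT, if_pos hcond]
      refine le_trans (iInf_le_of_le 1 (iInf_le_of_le one_ne_zero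
        (iInf_le_of_le hGtop le_rfl))) ?_
      simp only [inv_one, one_smul]
      have hcont_le : contentOf D K (G : Set (RatFunc K)) ≤ E :=
        contentOf_le (fun x hx => h3 hx)
      have hcont_ne : contentOf D K (G : Set (RatFunc K)) ≠ ⊥ := by
        have h := contentOf_smul_ne_bot h1 (one_ne_zero (α := RatFunc K))
          (hTop G 1 hGtop)
        rwa [one_smul] at h
      have hcont_fg : (contentOf D K (G : Set (RatFunc K))).FG := by
        have h := contentOf_smul_fg h2 (hTop G 1 hGtop)
        rwa [one_smul] at h
      exact polyExt_mono (op_le_finTypeFun star hcont_ne hcont_fg hcont_le)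
    · rintro f ⟨p, hp, rfl⟩
      obtain ⟨F, hF1, hF2, hF3, hF4⟩ := exists_F_for_poly hstar hE p hp
      obtain ⟨t, ht⟩ := hF2
      obtain ⟨x0, hx0t, hx00⟩ : ∃ x0 ∈ t, x0 ≠ 0 := by
        by_contra hc; push_neg at hc
        exact hF1 (by rw [← ht, Submodule.span_eq_bot]; exact fun x hx => hc x hx)
      set G : Submodule (Polynomial D) (RatFunc K) :=
        Submodule.span (Polynomial D) ((algebraMap K (RatFunc K)) '' (t : Set K)) with hGdef
      have hx0F : x0 ∈ F := ht ▸ Submodule.subset_span hx0t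
      have hGle : G ≤ polyExt D K E := by
        rw [Submodule.span_le]; rintro _ ⟨x, hxt, rfl⟩
        exact algK_mem_polyExt (hF3 (ht ▸ Submodule.subset_span hxt))
      have hGfg : G.FG := Submodule.fg_span ((t : Set K).toFinite.image _)
      have hx0G : algebraMap K (RatFunc K) x0 ∈ G := Submodule.subset_span ⟨x0, hx0t, rfl⟩
      have hx0ne : algebraMap K (RatFunc K) x0 ≠ 0 := by
        simpa using (RingHom.injective (algebraMap K (RatFunc K))).ne_iff.mpr hx00
      have hGne : G ≠ ⊥ := (Submodule.ne_bot_iff G).mpr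
        ⟨algebraMap K (RatFunc K) x0, hx0G, hx0ne⟩
      have hmem : algebraMap (Polynomial K) (RatFunc K) p ∈ bigTri D K star G := by
        rw [bigTri, bigTriT]
        split_ifs with hcond
        · refine Submodule.mem_iInf _ |>.mpr fun z => Submodule.mem_iInf _ |>.mpr fun hz =>
            Submodule.mem_iInf _ |>.mpr fun hzG => ?_
          rw [mem_inv_smul_iff hz]
          obtain ⟨q0, hq0⟩ := mem_polyExt_top_iff.mp (hzG _ hx0G)
          set w : Polynomial K := Polynomial.C x0⁻¹ * q0 with hwdef
          have hzw : z = algebraMap (Polynomial K) (RatFunc K) w := by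
            rw [hwdef, map_mul, ← hq0, ← algK_eq, map_inv₀]
            rw [mul_comm z, ← mul_assoc, inv_mul_cancel₀ hx0ne, one_mul]
          set C0 : Submodule D K := contentOf D K (z • (G : Set (RatFunc K))) with hC0
          have hC0ne : C0 ≠ ⊥ := contentOf_smul_ne_bot hGne hz (hTop G z hzG)
          rw [hzw, ← map_mul]
          refine ⟨w * p, fun n => ?_, rfl⟩
          rw [Polynomial.coeff_mul]
          refine Submodule.sum_mem _ fun jk _ => ?_
          by_cases hwj : w.coeff jk.1 = 0
          · rw [hwj, zero_mul]; exact zero_mem _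
          · have hwF_le : ∀ x ∈ F, w.coeff jk.1 * x ∈ C0 := by
              intro x hx
              rw [← ht] at hx
              refine Submodule.span_induction ?_ ?_ ?_ ?_ hx
              · intro y hy
                have hyG : algebraMap K (RatFunc K) y ∈ G :=
                  Submodule.subset_span ⟨y, hy, rfl⟩
                have hmem' : algebraMap (Polynomial K) (RatFunc K) (w * Polynomial.C y) ∈
                    z • (G : Set (RatFunc K)) := by
                  refine ⟨algebraMap K (RatFunc K) y, hyG, ?_⟩
                  show z • algebraMap K (RatFunc K) y =
                    algebraMap (Polynomial K) (RatFunc K) (w * Polynomial.C y)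
                  rw [smul_eq_mul, hzw, algK_eq, ← map_mul]
                have := coeff_mem_contentOf (D := D) hmem' jk.1
                rwa [Polynomial.coeff_mul_C] at this
              · rw [mul_zero]; exact zero_mem _
              · intro u v _ _ hu hv
                rw [mul_add]; exact Submodule.add_mem _ hu hv
              · intro d y _ hy
                rw [Algebra.smul_def, mul_left_comm, ← Algebra.smul_def]
                exact Submodule.smul_mem _ d hy
            have hwFle' : w.coeff jk.1 • F ≤ C0 := by
              intro y hy
              rw [← SetLike.mem_coe, Submodule.coe_pointwise_smul] at hy
              obtain ⟨x, hxF, rfl⟩ := hy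
              show w.coeff jk.1 • x ∈ C0
              rw [smul_eq_mul]
              exact hwF_le x hxF
            have hwFne : w.coeff jk.1 • F ≠ ⊥ := by
              refine (Submodule.ne_bot_iff _).mpr ⟨w.coeff jk.1 * x0, ?_, mul_ne_zero hwj hx00⟩
              have := Submodule.smul_mem_pointwise_smul x0 (w.coeff jk.1) F hx0F
              rwa [smul_eq_mul] at this
            have h1' : w.coeff jk.1 * p.coeff jk.2 ∈ star (w.coeff jk.1 • F) := by
              rw [hstar.1 _ hwj F hF1]
              have := Submodule.smul_mem_pointwise_smul _ (w.coeff jk.1) (star F) (hF4 jk.2)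
              rwa [smul_eq_mul] at this
            exact hstar.2.1 _ _ hwFne hC0ne hwFle' h1'
        · exact Submodule.mem_top
      exact op_le_finTypeFun (bigTri D K star) hGne hGfg hGle hmem
  refine ⟨?_, part2, ?_, ?_⟩
  · -- part 1
    intro A _
    refine iSup_congr fun G => iSup_congr fun h1 => iSup_congr fun h2 => iSup_congr fun h3 => ?_
    rw [bigTri, bigTri, bigTriT, bigTriT]
    split_ifs with hcond
    · refine iInf_congr fun z => iInf_congr fun hz => iInf_congr fun hzG => ?_
      rw [finTypeFun_eq_of_fg hstar (contentOf_smul_ne_bot h1 hz (hTop G z hzG))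
        (contentOf_smul_fg h2 (hTop G z hzG))]
    · rfl
  · -- part 3
    intro A _
    exact (finTypeFun_idem (bigTri D K star) A).symm
  · -- part 4
    intro b hb hbft hbext A hA
    rw [hbft A hA]
    refine iSup_le fun G => iSup_le fun h1 => iSup_le fun h2 => iSup_le fun h3 => ?_
    refine le_trans ?_ (op_le_finTypeFun (bigTri D K star) h1 h2 h3)
    rw [bigTri, bigTriT]
    split_ifs with hcond
    · refine le_iInf fun z => le_iInf fun hz => le_iInf fun hzG => ?_
      intro x hx
      rw [mem_inv_smul_iff hz]
      set C0 : Submodule D K := contentOf D K (z • (G : Set (RatFunc K))) with hC0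
      have hC0ne : C0 ≠ ⊥ := contentOf_smul_ne_bot h1 hz (hTop G z hzG)
      have h1' : z * x ∈ b (z • G) := by
        rw [hb.1 z hz G h1]
        have := Submodule.smul_mem_pointwise_smul x z (b G) hx
        rwa [smul_eq_mul] at this
      have hGle' : z • G ≤ polyExt D K C0 := by
        intro y hy
        rw [← SetLike.mem_coe, Submodule.coe_pointwise_smul] at hy
        obtain ⟨a, haG, rfl⟩ := hy
        obtain ⟨p, hp⟩ := mem_polyExt_top_iff.mp (hzG a haG)
        refine ⟨p, fun n => coeff_mem_contentOf ?_ n, ?_⟩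
        swap
        · show z • a = algebraMap (Polynomial K) (RatFunc K) p
          rw [smul_eq_mul, hp]
        rw [← hp]
        exact ⟨a, haG, rfl⟩
      have hzGne : z • G ≠ ⊥ := by
        obtain ⟨a, haG, ha0⟩ := (Submodule.ne_bot_iff G).mp h1
        refine (Submodule.ne_bot_iff _).mpr ⟨z • a,
          Submodule.smul_mem_pointwise_smul a z G haG, ?_⟩
        simp [smul_eq_mul, hz, ha0]
      have h2' : b (z • G) ≤ b (polyExt D K C0) :=
        hb.2.1 _ _ hzGne (polyExt_ne_bot hC0ne) hGle'
      have h3' : b (polyExt D K C0) = polyExt D K (finTypeFun D K star C0) := hbext C0 hC0ne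
      have h4' : finTypeFun D K star C0 ≤ star C0 := finTypeFun_le_self hstar hC0ne
      exact polyExt_mono h4' (h3' ▸ h2' h1')
    · exact le_top
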